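/- The Bell-Mermin model reproduces the Born rule: for Bloch vectors ψ, α, ∫_{S²} Θ(α·(ψ + λ₂)) (1/(4π)) dλ₂ = (1 + α·ψ)/2. -/

import Mathlib

open MeasureTheory Metric
open scoped RealInnerProductSpace

/-- The Heaviside step function: `Θ x = 1` for `x > 0` and `0` for `x ≤ 0`. -/
noncomputable def heaviside (x : ℝ) : ℝ := if 0 < x then 1 else 0

lemma heaviside_measurable : Measurable heaviside := by
  unfold heaviside
  exact Measurable.ite (measurableSet_lt measurable_const measurable_id) measurable_const
    measurable_const

lemma heaviside_mul_pos {r : ℝ} (hr : 0 < r) (x : ℝ) : heaviside (r * x) = heaviside x := by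
  unfold heaviside
  simp [mul_pos_iff_of_pos_left, hr]

lemma heaviside_nonneg (x : ℝ) : 0 ≤ heaviside x := by unfold heaviside; positivity

lemma heaviside_le_one (x : ℝ) : heaviside x ≤ 1 := by
  unfold heaviside; split <;> norm_num

notation "E3" => EuclideanSpace ℝ (Fin 3)

lemma Gamma_two' : Real.Gamma 2 = 1 := by
  rw [show (2:ℝ) = 1+1 by norm_num, Real.Gamma_add_one one_ne_zero, Real.Gamma_one]; ring

lemma vol2_ball (r : ℝ) (hr : 0 ≤ r) :
    volume (ball (0 : EuclideanSpace ℝ (Fin 2)) r) = ENNReal.ofReal (Real.pi * r ^ 2) := by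
  rw [EuclideanSpace.volume_ball, Fintype.card_fin]
  have h2 : Real.sqrt Real.pi ^ 2 / Real.Gamma ((2:ℕ) / 2 + 1) = Real.pi := by
    norm_num [Gamma_two', Real.sq_sqrt Real.pi_pos.le]
  rw [h2, ← ENNReal.ofReal_pow hr, ← ENNReal.ofReal_mul (by positivity)]
  ring_nf

lemma vol2_closedBall (r : ℝ) (hr : 0 ≤ r) :
    volume (closedBall (0 : EuclideanSpace ℝ (Fin 2)) r) = ENNReal.ofReal (Real.pi * r ^ 2) := by
  rw [Measure.addHaar_closedBall_eq_addHaar_ball, vol2_ball r hr]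

lemma sqrt_lt_nonneg {d x : ℝ} (hd : 0 ≤ d) (hx : 0 ≤ x) : Real.sqrt d < x ↔ d < x ^ 2 := by
  rcases hx.eq_or_lt with h | h
  · simp only [← h]
    constructor
    · intro hh; exact absurd hh (not_lt.2 (Real.sqrt_nonneg _))
    · intro hh; exact absurd hh (not_lt.2 (by simpa using hd))
  · exact Real.sqrt_lt' h

/-- The slice set at height `t`. -/
def sliceSet (c t : ℝ) : Set (EuclideanSpace ℝ (Fin 2)) :=
  {y | 0 < c * Real.sqrt (t ^ 2 + ‖y‖ ^ 2) + t ∧ t ^ 2 + ‖y‖ ^ 2 < 1}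

/-- Area of the slice. -/
noncomputable def sliceA (c t : ℝ) : ℝ := (volume (sliceSet c t)).toReal

lemma sliceSet_measurable (c t : ℝ) : MeasurableSet (sliceSet c t) := by
  have h1 : Continuous fun y : EuclideanSpace ℝ (Fin 2) =>
      c * Real.sqrt (t ^ 2 + ‖y‖ ^ 2) + t := by
    exact ((continuous_const.mul ((continuous_const.add
      ((continuous_norm).pow 2)).sqrt)).add continuous_const)
  have h2 : Continuous fun y : EuclideanSpace ℝ (Fin 2) => t ^ 2 + ‖y‖ ^ 2 :=
    continuous_const.add ((continuous_norm).pow 2)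
  exact (measurableSet_lt measurable_const h1.measurable).inter
    (measurableSet_lt h2.measurable measurable_const)

-- SL1 : c ≥ 0, 0 < t < 1
lemma sliceA_pos (c t : ℝ) (hc : 0 ≤ c) (ht : 0 < t) (ht1 : t < 1) :
    sliceA c t = Real.pi - Real.pi * t ^ 2 := by
  have h1t : (0:ℝ) ≤ 1 - t ^ 2 := by nlinarith
  have hset : sliceSet c t = ball (0 : EuclideanSpace ℝ (Fin 2)) (Real.sqrt (1 - t ^ 2)) := by
    ext y
    simp only [sliceSet, Set.mem_setOf_eq, mem_ball_zero_iff]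
    rw [Real.lt_sqrt (norm_nonneg _)]
    constructor
    · rintro ⟨-, h2⟩; linarith
    · intro h
      refine ⟨by positivity, by linarith⟩
  rw [sliceA, hset, vol2_ball _ (Real.sqrt_nonneg _), Real.sq_sqrt h1t,
    ENNReal.toReal_ofReal (mul_nonneg Real.pi_pos.le h1t)]
  ring

-- SL2 : |t| ≥ 1
lemma sliceA_big (c t : ℝ) (ht : 1 ≤ |t|) : sliceA c t = 0 := by
  have h1 : (1:ℝ) ≤ t ^ 2 := by nlinarith [sq_abs t]
  have hset : sliceSet c t = ∅ := by
    ext y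
    simp only [sliceSet, Set.mem_setOf_eq, Set.mem_empty_iff_false, iff_false, not_and, not_lt]
    intro _
    nlinarith [sq_nonneg ‖y‖]
  simp [sliceA, hset]

-- SL4 : c ≥ 0, t < 0, t ≤ -c
lemma sliceA_neg_out (c t : ℝ) (hc : 0 ≤ c) (ht : t < 0) (htc : t ≤ -c) : sliceA c t = 0 := by
  have hset : sliceSet c t = ∅ := by
    ext y
    simp only [sliceSet, Set.mem_setOf_eq, Set.mem_empty_iff_false, iff_false, not_and, not_lt]
    intro h1
    by_contra h2
    push_neg at h2
    have hs : Real.sqrt (t ^ 2 + ‖y‖ ^ 2) < 1 := by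
      rw [show (1:ℝ) = Real.sqrt 1 by simp]
      exact Real.sqrt_lt_sqrt (by positivity) (by linarith)
    have hs0 : 0 ≤ Real.sqrt (t ^ 2 + ‖y‖ ^ 2) := Real.sqrt_nonneg _
    nlinarith [mul_le_mul_of_nonneg_left hs.le hc]
  simp [sliceA, hset]

-- SL7 : c < 0, t ≤ 0
lemma sliceA_negc_out (c t : ℝ) (hc : c < 0) (ht : t ≤ 0) : sliceA c t = 0 := by
  have hset : sliceSet c t = ∅ := by
    ext y
    simp only [sliceSet, Set.mem_setOf_eq, Set.mem_empty_iff_false, iff_false, not_and, not_lt]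
    intro h1
    exfalso
    have hs0 : 0 ≤ Real.sqrt (t ^ 2 + ‖y‖ ^ 2) := Real.sqrt_nonneg _
    nlinarith
  simp [sliceA, hset]

-- key condition rewrite for c > 0, t < 0
lemma cond_neg (c t : ℝ) (hc : 0 < c) (ht : t < 0) (y : EuclideanSpace ℝ (Fin 2)) :
    (0 < c * Real.sqrt (t ^ 2 + ‖y‖ ^ 2) + t) ↔ t ^ 2 / c ^ 2 - t ^ 2 < ‖y‖ ^ 2 := by
  have h2 : (-t) / c < Real.sqrt (t ^ 2 + ‖y‖ ^ 2) ↔ ((-t) / c) ^ 2 < t ^ 2 + ‖y‖ ^ 2 :=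
    Real.lt_sqrt (div_nonneg (by linarith) hc.le)
  have h3 : ((-t) / c) ^ 2 = t ^ 2 / c ^ 2 := by rw [div_pow, neg_pow]; ring_nf
  constructor
  · intro h
    have h4 : (-t) / c < Real.sqrt (t ^ 2 + ‖y‖ ^ 2) := by
      rw [div_lt_iff₀ hc]
      nlinarith
    have := h2.mp h4
    rw [h3] at this
    linarith
  · intro h
    have h5 : ((-t) / c) ^ 2 < t ^ 2 + ‖y‖ ^ 2 := by rw [h3]; linarith
    have := h2.mpr h5
    rw [div_lt_iff₀ hc] at this
    nlinarith

-- SL3 : 0 < c ≤ 1, -c < t < 0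
lemma sliceA_neg_in (c t : ℝ) (hc : 0 < c) (hc1 : c ≤ 1) (htl : -c < t) (ht : t < 0) :
    sliceA c t = Real.pi - Real.pi / c ^ 2 * t ^ 2 := by
  have htc : t ^ 2 < c ^ 2 := by nlinarith
  have hcc : c ^ 2 ≤ 1 := by nlinarith
  have hd : (0:ℝ) ≤ t ^ 2 / c ^ 2 - t ^ 2 := by
    rw [sub_nonneg, le_div_iff₀ (by positivity)]
    exact mul_le_of_le_one_right (sq_nonneg t) hcc
  have hdo : t ^ 2 / c ^ 2 - t ^ 2 < 1 - t ^ 2 := by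
    have : t ^ 2 / c ^ 2 < 1 := by rw [div_lt_one (by positivity)]; exact htc
    linarith
  have hset : sliceSet c t = ball (0 : EuclideanSpace ℝ (Fin 2)) (Real.sqrt (1 - t ^ 2)) \
      closedBall 0 (Real.sqrt (t ^ 2 / c ^ 2 - t ^ 2)) := by
    ext y
    simp only [sliceSet, Set.mem_setOf_eq, Set.mem_diff, mem_ball_zero_iff,
      mem_closedBall_zero_iff, not_le]
    rw [Real.lt_sqrt (norm_nonneg _), sqrt_lt_nonneg hd (norm_nonneg _), cond_neg c t hc ht]
    constructor
    · rintro ⟨h1, h2⟩; exact ⟨by linarith, h1⟩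
    · rintro ⟨h1, h2⟩; exact ⟨h2, by linarith⟩
  have hsub : closedBall (0 : EuclideanSpace ℝ (Fin 2)) (Real.sqrt (t ^ 2 / c ^ 2 - t ^ 2)) ⊆
      ball 0 (Real.sqrt (1 - t ^ 2)) :=
    closedBall_subset_ball (Real.sqrt_lt_sqrt hd hdo)
  rw [sliceA, hset, measure_diff hsub measurableSet_closedBall.nullMeasurableSet
    (by rw [vol2_closedBall _ (Real.sqrt_nonneg _)]; exact ENNReal.ofReal_ne_top),
    vol2_ball _ (Real.sqrt_nonneg _), vol2_closedBall _ (Real.sqrt_nonneg _),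
    Real.sq_sqrt (by nlinarith : (0:ℝ) ≤ 1 - t ^ 2), Real.sq_sqrt hd,
    ← ENNReal.ofReal_sub _ (mul_nonneg Real.pi_pos.le hd),
    ENNReal.toReal_ofReal (by nlinarith [Real.pi_pos])]
  field_simp
  ring

-- key condition rewrite for c < 0, t > 0
lemma cond_pos (c t : ℝ) (hc : c < 0) (ht : 0 < t) (y : EuclideanSpace ℝ (Fin 2)) :
    (0 < c * Real.sqrt (t ^ 2 + ‖y‖ ^ 2) + t) ↔ t ^ 2 + ‖y‖ ^ 2 < t ^ 2 / c ^ 2 := by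
  have h2 : Real.sqrt (t ^ 2 + ‖y‖ ^ 2) < t / (-c) ↔ t ^ 2 + ‖y‖ ^ 2 < (t / (-c)) ^ 2 :=
    Real.sqrt_lt' (div_pos ht (neg_pos.mpr hc))
  have h3 : (t / (-c)) ^ 2 = t ^ 2 / c ^ 2 := by rw [div_pow, neg_pow]; ring_nf
  rw [h3] at h2
  rw [← h2, lt_div_iff₀ (neg_pos.mpr hc)]
  constructor
  · intro h; nlinarith
  · intro h; nlinarith

-- SL5 : -1 ≤ c < 0, 0 < t ≤ -c
lemma sliceA_posc_in (c t : ℝ) (hc : c < 0) (hc1 : -1 ≤ c) (ht : 0 < t) (htc : t ≤ -c) :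
    sliceA c t = Real.pi / c ^ 2 * t ^ 2 - Real.pi * t ^ 2 := by
  have hc2 : (0:ℝ) < c ^ 2 := by nlinarith
  have hcc : c ^ 2 ≤ 1 := by nlinarith
  have htc2 : t ^ 2 ≤ c ^ 2 := by nlinarith
  have hd : (0:ℝ) ≤ t ^ 2 / c ^ 2 - t ^ 2 := by
    rw [sub_nonneg, le_div_iff₀ hc2]
    exact mul_le_of_le_one_right (sq_nonneg t) hcc
  have hset : sliceSet c t =
      ball (0 : EuclideanSpace ℝ (Fin 2)) (Real.sqrt (t ^ 2 / c ^ 2 - t ^ 2)) := by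
    ext y
    simp only [sliceSet, Set.mem_setOf_eq, mem_ball_zero_iff]
    rw [Real.lt_sqrt (norm_nonneg _), cond_pos c t hc ht]
    constructor
    · rintro ⟨h1, -⟩; linarith
    · intro h
      have h1 : t ^ 2 + ‖y‖ ^ 2 < t ^ 2 / c ^ 2 := by linarith
      refine ⟨h1, ?_⟩
      have : t ^ 2 / c ^ 2 ≤ 1 := by
        rw [div_le_one hc2]; nlinarith
      linarith
  rw [sliceA, hset, vol2_ball _ (Real.sqrt_nonneg _), Real.sq_sqrt hd,
    ENNReal.toReal_ofReal (mul_nonneg Real.pi_pos.le hd)]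
  ring

-- SL6 : c < 0, -c < t < 1
lemma sliceA_posc_out (c t : ℝ) (hc : c < 0) (htc : -c < t) (ht1 : t < 1) :
    sliceA c t = Real.pi - Real.pi * t ^ 2 := by
  have ht : 0 < t := lt_trans (by linarith) htc
  have h1t : (0:ℝ) ≤ 1 - t ^ 2 := by nlinarith
  have hset : sliceSet c t = ball (0 : EuclideanSpace ℝ (Fin 2)) (Real.sqrt (1 - t ^ 2)) := by
    ext y
    simp only [sliceSet, Set.mem_setOf_eq, mem_ball_zero_iff]
    rw [Real.lt_sqrt (norm_nonneg _), cond_pos c t hc ht]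
    constructor
    · rintro ⟨-, h2⟩; linarith
    · intro h
      have h2 : t ^ 2 + ‖y‖ ^ 2 < 1 := by linarith
      refine ⟨?_, h2⟩
      have hgt : 1 < t ^ 2 / c ^ 2 := by
        rw [lt_div_iff₀ (by nlinarith : (0:ℝ) < c ^ 2)]; nlinarith
      linarith
  rw [sliceA, hset, vol2_ball _ (Real.sqrt_nonneg _), Real.sq_sqrt h1t,
    ENNReal.toReal_ofReal (mul_nonneg Real.pi_pos.le h1t)]
  ring

lemma sum_sq_eq (y : EuclideanSpace ℝ (Fin 2)) : ∑ j, (y j) ^ 2 = ‖y‖ ^ 2 := by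
  rw [EuclideanSpace.norm_eq, Real.sq_sqrt (by positivity)]
  simp [sq_abs]

lemma inner_integral (c t : ℝ) :
    ∫ w : Fin 2 → ℝ, heaviside (c * Real.sqrt (t ^ 2 + ∑ j, (w j) ^ 2) + t) *
      (if t ^ 2 + ∑ j, (w j) ^ 2 < 1 then (1:ℝ) else 0) = sliceA c t := by
  have hmp := EuclideanSpace.volume_preserving_symm_measurableEquiv_toLp (Fin 2)
  rw [← hmp.integral_comp (MeasurableEquiv.measurableEmbedding _) _]
  have hco : ∀ y : EuclideanSpace ℝ (Fin 2),
      heaviside (c * Real.sqrt (t ^ 2 + ∑ j, ((MeasurableEquiv.toLp 2 (Fin 2 → ℝ)).symm y j) ^ 2) + t) *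
      (if t ^ 2 + ∑ j, ((MeasurableEquiv.toLp 2 (Fin 2 → ℝ)).symm y j) ^ 2 < 1 then (1:ℝ) else 0)
      = Set.indicator (sliceSet c t) 1 y := by
    intro y
    have hy : ∀ j, (MeasurableEquiv.toLp 2 (Fin 2 → ℝ)).symm y j = y j := fun j => rfl
    simp only [hy, sum_sq_eq, Set.indicator_apply, sliceSet, Set.mem_setOf_eq, heaviside]
    by_cases h1 : 0 < c * Real.sqrt (t ^ 2 + ‖y‖ ^ 2) + t <;>
      by_cases h2 : t ^ 2 + ‖y‖ ^ 2 < 1 <;> simp [h1, h2]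
  simp only [hco]
  rw [integral_indicator_one (sliceSet_measurable c t)]
  rfl

-- helper: integral of an indicator of Ioo with continuous integrand
lemma indicator_Ioo_integrable {a b : ℝ} {f : ℝ → ℝ} (hf : Continuous f) :
    Integrable (Set.indicator (Set.Ioo a b) f) := by
  rw [integrable_indicator_iff measurableSet_Ioo]
  exact (hf.intervalIntegrable a b).1.mono_set Set.Ioo_subset_Ioc_self

lemma integral_indicator_Ioo {a b : ℝ} (hab : a ≤ b) (f : ℝ → ℝ) :
    ∫ t, Set.indicator (Set.Ioo a b) f t = ∫ t in a..b, f t := by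
  rw [integral_indicator measurableSet_Ioo, ← MeasureTheory.integral_Ioc_eq_integral_Ioo,
    intervalIntegral.integral_of_le hab]

lemma intint_poly (a b k : ℝ) :
    ∫ t in a..b, (Real.pi - k * t ^ 2) = Real.pi * (b - a) - k * ((b ^ 3 - a ^ 3) / 3) := by
  rw [intervalIntegral.integral_sub ((by fun_prop : Continuous fun _ : ℝ => Real.pi).intervalIntegrable a b)
      ((by fun_prop : Continuous fun t : ℝ => k * t ^ 2).intervalIntegrable a b),
    intervalIntegral.integral_const, intervalIntegral.integral_const_mul,
    integral_pow, smul_eq_mul]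
  push_cast
  ring

lemma intint_poly2 (a b k : ℝ) :
    ∫ t in a..b, (k * t ^ 2 - Real.pi * t ^ 2) = (k - Real.pi) * ((b ^ 3 - a ^ 3) / 3) := by
  have : (fun t : ℝ => k * t ^ 2 - Real.pi * t ^ 2) = fun t : ℝ => (k - Real.pi) * t ^ 2 := by
    funext t; ring
  rw [this, intervalIntegral.integral_const_mul, integral_pow]
  push_cast
  ring

lemma ae_ne (x : ℝ) : ∀ᵐ t : ℝ, t ≠ x := by
  have : volume ({x} : Set ℝ) = 0 := measure_singleton x
  rw [ae_iff]
  convert this using 2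
  ext t
  simp

lemma outer_integral (c : ℝ) (hc1 : |c| ≤ 1) :
    ∫ t : ℝ, sliceA c t = 2 * Real.pi / 3 * (1 + c) := by
  obtain ⟨hcl, hcu⟩ := abs_le.mp hc1
  rcases lt_trichotomy c 0 with hneg | rfl | hpos
  · -- c < 0
    set g1 : ℝ → ℝ := Set.indicator (Set.Ioo 0 (-c)) (fun t => Real.pi / c ^ 2 * t ^ 2 - Real.pi * t ^ 2) with hg1
    set g2 : ℝ → ℝ := Set.indicator (Set.Ioo (-c) 1) (fun t => Real.pi - Real.pi * t ^ 2) with hg2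
    have hae : (fun t => sliceA c t) =ᵐ[volume] fun t => g1 t + g2 t := by
      filter_upwards [ae_ne (-c)] with t ht0
      rcases le_or_gt t 0 with ht | ht
      · rw [sliceA_negc_out c t hneg ht, hg1, hg2]
        rw [Set.indicator_of_notMem (by simp [Set.mem_Ioo]; intro h; linarith),
          Set.indicator_of_notMem (by simp [Set.mem_Ioo]; intro h; linarith)]
        ring
      · rcases lt_trichotomy t (-c) with h1 | h1 | h1
        · rw [sliceA_posc_in c t hneg hcl ht h1.le, hg1, hg2,
            Set.indicator_of_mem (Set.mem_Ioo.mpr ⟨ht, h1⟩),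
            Set.indicator_of_notMem (by simp [Set.mem_Ioo]; intro h; linarith)]
          ring
        · exact absurd h1 ht0
        · rcases lt_or_ge t 1 with h2 | h2
          · rw [sliceA_posc_out c t hneg h1 h2, hg1, hg2,
              Set.indicator_of_notMem (by simp [Set.mem_Ioo]; intro h; linarith),
              Set.indicator_of_mem (Set.mem_Ioo.mpr ⟨h1, h2⟩)]
            ring
          · rw [sliceA_big c t (by rw [abs_of_pos ht]; linarith), hg1, hg2,
              Set.indicator_of_notMem (by simp [Set.mem_Ioo]; intro h; nlinarith),
              Set.indicator_of_notMem (by simp [Set.mem_Ioo]; intro h; linarith)]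
            ring
    rw [integral_congr_ae hae, integral_add (indicator_Ioo_integrable (by fun_prop))
        (indicator_Ioo_integrable (by fun_prop)),
      integral_indicator_Ioo (by linarith) _, integral_indicator_Ioo (by linarith) _,
      intint_poly2, intint_poly]
    have hc0 : c ≠ 0 := ne_of_lt hneg
    field_simp
    ring
  · -- c = 0
    have hae : (fun t => sliceA 0 t) =ᵐ[volume]
        Set.indicator (Set.Ioo 0 1) (fun t => Real.pi - Real.pi * t ^ 2) := by
      filter_upwards [ae_ne 0] with t ht0
      rcases lt_trichotomy t 0 with ht | ht | ht
      · rw [sliceA_neg_out 0 t le_rfl ht (by linarith),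
          Set.indicator_of_notMem (by simp [Set.mem_Ioo]; intro h; linarith)]
      · exact absurd ht ht0
      · rcases lt_or_ge t 1 with h2 | h2
        · rw [sliceA_pos 0 t le_rfl ht h2, Set.indicator_of_mem (Set.mem_Ioo.mpr ⟨ht, h2⟩)]
        · rw [sliceA_big 0 t (by rw [abs_of_pos ht]; linarith),
            Set.indicator_of_notMem (by simp [Set.mem_Ioo]; intro h; linarith)]
    rw [integral_congr_ae hae, integral_indicator_Ioo (by linarith) _, intint_poly]
    ring
  · -- c > 0
    set g1 : ℝ → ℝ := Set.indicator (Set.Ioo (-c) 0) (fun t => Real.pi - Real.pi / c ^ 2 * t ^ 2) with hg1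
    set g2 : ℝ → ℝ := Set.indicator (Set.Ioo 0 1) (fun t => Real.pi - Real.pi * t ^ 2) with hg2
    have hae : (fun t => sliceA c t) =ᵐ[volume] fun t => g1 t + g2 t := by
      filter_upwards [ae_ne 0] with t ht0
      rcases lt_trichotomy t 0 with ht | ht | ht
      · rcases lt_or_ge (-c) t with h1 | h1
        · rw [sliceA_neg_in c t hpos hcu h1 ht, hg1, hg2,
            Set.indicator_of_mem (Set.mem_Ioo.mpr ⟨h1, ht⟩),
            Set.indicator_of_notMem (by simp [Set.mem_Ioo]; intro h; linarith)]
          ring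
        · rw [sliceA_neg_out c t hpos.le ht h1, hg1, hg2,
            Set.indicator_of_notMem (by simp [Set.mem_Ioo]; intro h; linarith),
            Set.indicator_of_notMem (by simp [Set.mem_Ioo]; intro h; linarith)]
          ring
      · exact absurd ht ht0
      · rcases lt_or_ge t 1 with h2 | h2
        · rw [sliceA_pos c t hpos.le ht h2, hg1, hg2,
            Set.indicator_of_notMem (by simp [Set.mem_Ioo]; intro h; linarith),
            Set.indicator_of_mem (Set.mem_Ioo.mpr ⟨ht, h2⟩)]
          ring
        · rw [sliceA_big c t (by rw [abs_of_pos ht]; linarith), hg1, hg2,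
            Set.indicator_of_notMem (by simp [Set.mem_Ioo]; intro h; linarith),
            Set.indicator_of_notMem (by simp [Set.mem_Ioo]; intro h; linarith)]
          ring
    rw [integral_congr_ae hae, integral_add (indicator_Ioo_integrable (by fun_prop))
        (indicator_Ioo_integrable (by fun_prop)),
      integral_indicator_Ioo (by linarith) _, integral_indicator_Ioo (by linarith) _,
      intint_poly, intint_poly]
    have hc0 : c ≠ 0 := ne_of_gt hpos
    field_simp
    ring

lemma norm_eq_sqrt_sum (y : E3) : ‖y‖ = Real.sqrt (∑ i, (y i) ^ 2) := by
  rw [EuclideanSpace.norm_eq]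
  congr 1
  refine Finset.sum_congr rfl fun i _ => ?_
  rw [Real.norm_eq_abs, sq_abs]

-- The key intermediate: the full-space integral W
lemma W_value (α : E3) (hα : ‖α‖ = 1) (c : ℝ) (hc : |c| ≤ 1) :
    ∫ x : E3, heaviside (c * ‖x‖ + ⟪α, x⟫) * (if ‖x‖ < 1 then (1:ℝ) else 0)
      = 2 * Real.pi / 3 * (1 + c) := by
  classical
  -- orthonormal basis with b 0 = α
  have hcard : Module.finrank ℝ E3 = Fintype.card (Fin 3) := by
    simp [finrank_euclideanSpace]
  have horth : Orthonormal ℝ (Set.restrict ({0} : Set (Fin 3)) (fun _ => α)) := by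
    constructor
    · intro i; exact hα
    · intro i j hij
      exfalso
      apply hij
      have hi := i.2
      have hj := j.2
      simp only [Set.mem_singleton_iff] at hi hj
      exact Subtype.ext (hi.trans hj.symm)
  obtain ⟨b, hb⟩ := horth.exists_orthonormalBasis_extension_of_card_eq hcard
  have hb0 : b 0 = α := hb 0 rfl
  -- Step 1: rotate
  have h1 : ∫ x : E3, heaviside (c * ‖x‖ + ⟪α, x⟫) * (if ‖x‖ < 1 then (1:ℝ) else 0)
      = ∫ y : EuclideanSpace ℝ (Fin 3),
          heaviside (c * ‖y‖ + y 0) * (if ‖y‖ < 1 then (1:ℝ) else 0) := by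
    rw [← (b.measurePreserving_repr_symm).integral_comp
      b.repr.symm.toHomeomorph.measurableEmbedding
      (fun x => heaviside (c * ‖x‖ + ⟪α, x⟫) * (if ‖x‖ < 1 then (1:ℝ) else 0))]
    refine integral_congr_ae (Filter.Eventually.of_forall fun y => ?_)
    dsimp only
    have hnorm : ‖b.repr.symm y‖ = ‖y‖ := b.repr.symm.norm_map y
    have hinner : ⟪α, b.repr.symm y⟫ = y 0 := by
      have := b.repr.inner_map_map α (b.repr.symm y)
      rw [b.repr.apply_symm_apply] at this
      rw [← this, ← hb0, b.repr_self]
      rw [EuclideanSpace.inner_single_left]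
      simp
    rw [hnorm, hinner]
  rw [h1]
  -- Step 2: to pi measure
  have h2 : ∫ y : EuclideanSpace ℝ (Fin 3),
        heaviside (c * ‖y‖ + y 0) * (if ‖y‖ < 1 then (1:ℝ) else 0)
      = ∫ z : Fin 3 → ℝ, heaviside (c * Real.sqrt (∑ i, (z i) ^ 2) + z 0) *
          (if ∑ i, (z i) ^ 2 < 1 then (1:ℝ) else 0) := by
    rw [← (EuclideanSpace.volume_preserving_symm_measurableEquiv_toLp (Fin 3)).integral_comp
      (MeasurableEquiv.measurableEmbedding _)
      (fun z => heaviside (c * Real.sqrt (∑ i, (z i) ^ 2) + z 0) *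
          (if ∑ i, (z i) ^ 2 < 1 then (1:ℝ) else 0))]
    refine integral_congr_ae (Filter.Eventually.of_forall fun y => ?_)
    have happ : ∀ i, (MeasurableEquiv.toLp 2 (Fin 3 → ℝ)).symm y i = y i := fun _ => rfl
    simp only [happ]
    rw [← norm_eq_sqrt_sum]
    have hlt : ‖y‖ < 1 ↔ ∑ i, (y i) ^ 2 < 1 := by
      rw [norm_eq_sqrt_sum, Real.sqrt_lt' one_pos, one_pow]
    rw [norm_eq_sqrt_sum]
    by_cases hc1 : ∑ i, (y i) ^ 2 < 1
    · simp [hc1, (by rwa [← hlt, norm_eq_sqrt_sum] at hc1 : Real.sqrt (∑ i, (y i)^2) < 1)]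
    · have : ¬ (Real.sqrt (∑ i, (y i)^2) < 1) := by
        rw [← norm_eq_sqrt_sum, hlt]; exact hc1
      simp [hc1, this]
  rw [h2]
  -- Step 3: split off the first coordinate
  set K : ℝ × (Fin 2 → ℝ) → ℝ := fun p =>
    heaviside (c * Real.sqrt (p.1 ^ 2 + ∑ j, (p.2 j) ^ 2) + p.1) *
      (if p.1 ^ 2 + ∑ j, (p.2 j) ^ 2 < 1 then (1:ℝ) else 0) with hK
  have h3 : ∫ z : Fin 3 → ℝ, heaviside (c * Real.sqrt (∑ i, (z i) ^ 2) + z 0) *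
        (if ∑ i, (z i) ^ 2 < 1 then (1:ℝ) else 0)
      = ∫ p : ℝ × (Fin 2 → ℝ), K p := by
    rw [← ((volume_preserving_piFinSuccAbove (fun _ : Fin 3 => ℝ) 0).symm (MeasurableEquiv.piFinSuccAbove (fun _ : Fin 3 => ℝ) 0)).integral_comp
      (MeasurableEquiv.measurableEmbedding _)
      (fun z => heaviside (c * Real.sqrt (∑ i, (z i) ^ 2) + z 0) *
        (if ∑ i, (z i) ^ 2 < 1 then (1:ℝ) else 0))]
    refine integral_congr_ae (Filter.Eventually.of_forall fun p => ?_)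
    dsimp only
    have hz : ((MeasurableEquiv.piFinSuccAbove (fun _ : Fin 3 => ℝ) 0).symm p)
        = Fin.insertNth 0 p.1 p.2 := rfl
    have hsum : ∑ i, ((Fin.insertNth 0 p.1 p.2 : Fin 3 → ℝ) i) ^ 2
        = p.1 ^ 2 + ∑ j, (p.2 j) ^ 2 := by
      rw [Fin.sum_univ_succAbove (fun i => ((Fin.insertNth 0 p.1 p.2 : Fin 3 → ℝ) i) ^ 2) 0]
      simp
    rw [hz, hK]
    simp only [hsum, Fin.insertNth_apply_same]
  rw [h3]
  -- Step 4: Fubini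
  have hDmeas : MeasurableSet {p : ℝ × (Fin 2 → ℝ) | p.1 ^ 2 + ∑ j, (p.2 j) ^ 2 < 1} := by
    have : Continuous fun p : ℝ × (Fin 2 → ℝ) => p.1 ^ 2 + ∑ j, (p.2 j) ^ 2 := by
      apply Continuous.add
      · exact (continuous_fst.pow 2)
      · exact continuous_finset_sum _ fun j _ => ((continuous_apply j).comp continuous_snd).pow 2
    exact measurableSet_lt this.measurable measurable_const
  have hKmeas : Measurable K := by
    apply Measurable.mul
    · apply heaviside_measurable.comp
      apply Measurable.add _ measurable_fst
      apply Measurable.mul measurable_const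
      apply Real.continuous_sqrt.measurable.comp
      apply Measurable.add (measurable_fst.pow_const 2)
      exact Finset.measurable_sum _ fun j _ => ((measurable_pi_apply j).comp measurable_snd).pow_const 2
    · exact Measurable.ite hDmeas measurable_const measurable_const
  have hKint : Integrable K := by
    have hsub : {p : ℝ × (Fin 2 → ℝ) | p.1 ^ 2 + ∑ j, (p.2 j) ^ 2 < 1} ⊆
        (Set.Ioo (-1 : ℝ) 1) ×ˢ (Set.univ.pi fun _ : Fin 2 => Set.Ioo (-1 : ℝ) 1) := by
      rintro ⟨t, w⟩ hp
      simp only [Set.mem_setOf_eq] at hp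
      have hsq : ∀ j, (w j) ^ 2 ≤ ∑ j, (w j) ^ 2 :=
        fun j => Finset.single_le_sum (fun i _ => sq_nonneg (w i)) (Finset.mem_univ j)
      have hw : ∀ j, (w j) ^ 2 < 1 := by
        intro j; nlinarith [hsq j, sq_nonneg t]
      have htt : t ^ 2 < 1 := by
        have : (0:ℝ) ≤ ∑ j, (w j) ^ 2 := Finset.sum_nonneg fun i _ => sq_nonneg _
        nlinarith
      constructor
      · constructor <;> nlinarith
      · intro j _
        constructor <;> nlinarith [hw j]
    have hDfin : volume {p : ℝ × (Fin 2 → ℝ) | p.1 ^ 2 + ∑ j, (p.2 j) ^ 2 < 1} < ⊤ := by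
      refine lt_of_le_of_lt (measure_mono hsub) ?_
      rw [Measure.volume_eq_prod, Measure.prod_prod, Real.volume_Ioo, volume_pi_pi]
      simp only [Real.volume_Ioo]
      norm_num
    have hg : Integrable (Set.indicator
        {p : ℝ × (Fin 2 → ℝ) | p.1 ^ 2 + ∑ j, (p.2 j) ^ 2 < 1} (fun _ => (1:ℝ))) :=
      (integrable_indicator_iff hDmeas).2 (integrableOn_const hDfin.ne)
    refine hg.mono' hKmeas.aestronglyMeasurable (Filter.Eventually.of_forall fun p => ?_)
    rw [hK, Set.indicator_apply]
    dsimp only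
    by_cases hp : p.1 ^ 2 + ∑ j, (p.2 j) ^ 2 < 1
    · simp only [Set.mem_setOf_eq, hp, if_true, mul_one, Real.norm_eq_abs]
      rw [abs_of_nonneg (heaviside_nonneg _)]
      exact heaviside_le_one _
    · rw [if_neg hp, mul_zero, norm_zero]
      split <;> norm_num
  have h4 : ∫ p : ℝ × (Fin 2 → ℝ), K p = ∫ t : ℝ, ∫ w : Fin 2 → ℝ, K (t, w) := by
    rw [Measure.volume_eq_prod] at hKint ⊢
    exact integral_prod K hKint
  rw [h4]
  have h5 : ∀ t : ℝ, ∫ w : Fin 2 → ℝ, K (t, w) = sliceA c t := fun t => inner_integral c t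
  simp only [h5]
  exact outer_integral c hc

lemma sphere_int (α : E3) (hα : ‖α‖ = 1) (c : ℝ) (hc : |c| ≤ 1) :
    ∫ l : sphere (0 : E3) 1, heaviside (c + ⟪α, (l : E3)⟫)
        ∂((volume : Measure E3).toSphere)
      = 2 * Real.pi * (1 + c) := by
  classical
  set σ := (volume : Measure E3).toSphere with hσ
  set g : sphere (0 : E3) 1 → ℝ := fun l => heaviside (c + ⟪α, (l : E3)⟫) with hg
  set h : Set.Ioi (0:ℝ) → ℝ := fun r => if (r : ℝ) < 1 then 1 else 0 with hh
  set F : E3 → ℝ := fun x => heaviside (c * ‖x‖ + ⟪α, x⟫) * (if ‖x‖ < 1 then (1:ℝ) else 0)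
    with hF
  have hdim : Module.finrank ℝ E3 - 1 = 2 := by simp [finrank_euclideanSpace]
  have hprod := (volume : Measure E3).measurePreserving_homeomorphUnitSphereProd
  rw [hdim] at hprod
  have hcomp := hprod.integral_comp (Homeomorph.measurableEmbedding _)
    (fun p => g p.1 * h p.2)
  rw [integral_prod_mul] at hcomp
  -- compute ∫ h
  have hIoi : ∫ r, h r ∂(Measure.volumeIoiPow 2) = 1/3 := by
    have hind : h = Set.indicator (Set.Iio (⟨1, Set.mem_Ioi.mpr one_pos⟩ : Set.Ioi (0:ℝ))) (1 : Set.Ioi (0:ℝ) → ℝ) := by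
      funext r
      rw [hh, Set.indicator_apply]
      dsimp only
      by_cases hr : (r : ℝ) < 1
      · rw [if_pos hr,
          if_pos (Set.mem_Iio.mpr (show r < ⟨1, Set.mem_Ioi.mpr one_pos⟩ from hr)),
          Pi.one_apply]
      · rw [if_neg hr, if_neg (show ¬(r ∈ Set.Iio
          (⟨1, Set.mem_Ioi.mpr one_pos⟩ : Set.Ioi (0:ℝ))) from
          fun hlt => hr (Set.mem_Iio.mp hlt))]
    rw [hind, MeasureTheory.integral_indicator_one measurableSet_Iio, measureReal_def,
      Measure.volumeIoiPow_apply_Iio]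
    norm_num
  -- LHS of hcomp equals ∫ F
  have hpt : ∀ x : ({0}ᶜ : Set E3),
      g ((homeomorphUnitSphereProd E3) x).1 * h ((homeomorphUnitSphereProd E3) x).2
        = F (x : E3) := by
    rintro ⟨x, hx⟩
    have hx0 : x ≠ 0 := hx
    have hn : (0:ℝ) < ‖x‖ := norm_pos_iff.mpr hx0
    dsimp only [g, h, F]
    rw [homeomorphUnitSphereProd_apply_fst_coe, homeomorphUnitSphereProd_apply_snd_coe]
    congr 1
    rw [real_inner_smul_right]
    rw [show c + ‖x‖⁻¹ * ⟪α, x⟫ = ‖x‖⁻¹ * (c * ‖x‖ + ⟪α, x⟫) by first | (field_simp; ring) | field_simp]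
    rw [heaviside_mul_pos (by positivity)]
  have hLHS : (∫ x : ({0}ᶜ : Set E3),
      g ((homeomorphUnitSphereProd E3) x).1 * h ((homeomorphUnitSphereProd E3) x).2
        ∂((volume : Measure E3).comap Subtype.val))
      = ∫ x : E3, F x := by
    calc (∫ x : ({0}ᶜ : Set E3),
        g ((homeomorphUnitSphereProd E3) x).1 * h ((homeomorphUnitSphereProd E3) x).2
          ∂((volume : Measure E3).comap Subtype.val))
        = ∫ x : ({0}ᶜ : Set E3), F (x : E3) ∂((volume : Measure E3).comap Subtype.val) :=
          integral_congr_ae (Filter.Eventually.of_forall hpt)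
      _ = ∫ x in ({0}ᶜ : Set E3), F x ∂(volume : Measure E3) :=
          integral_subtype_comap (measurableSet_singleton (0:E3)).compl F
      _ = ∫ x : E3, F x := by rw [restrict_compl_singleton]
  rw [hLHS, hIoi] at hcomp
  have hW := W_value α hα c hc
  have hc3 : (∫ x : sphere (0:E3) 1, g x ∂(volume : Measure E3).toSphere) * (1/3)
      = 2 * Real.pi / 3 * (1 + c) := by
    rw [← hcomp, hF]
    exact hW
  have hfin : (∫ x : sphere (0:E3) 1, g x ∂(volume : Measure E3).toSphere)
      = 2 * Real.pi * (1 + c) := by linarith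
  exact hfin

/-- The Bell-Mermin model reproduces the Born rule: for Bloch vectors
`ψ, α` on `S²`, `∫_{S²} Θ(α·(ψ + λ₂)) (1/(4π)) dλ₂ = (1 + α·ψ)/2 = |⟨α|ψ⟩|²`. -/
theorem bellMermin_born_rule
    (ψ α : sphere (0 : EuclideanSpace ℝ (Fin 3)) 1) :
    ∫ l : sphere (0 : EuclideanSpace ℝ (Fin 3)) 1,
        heaviside ⟪(α : EuclideanSpace ℝ (Fin 3)),
          (ψ : EuclideanSpace ℝ (Fin 3)) + (l : EuclideanSpace ℝ (Fin 3))⟫ *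
          (1 / (4 * Real.pi))
        ∂((volume : Measure (EuclideanSpace ℝ (Fin 3))).toSphere)
      = (1 + ⟪(α : EuclideanSpace ℝ (Fin 3)), (ψ : EuclideanSpace ℝ (Fin 3))⟫) / 2 := by
  have hαn : ‖(α : E3)‖ = 1 := by simpa using mem_sphere_zero_iff_norm.mp α.2
  have hψn : ‖(ψ : E3)‖ = 1 := by simpa using mem_sphere_zero_iff_norm.mp ψ.2
  set c : ℝ := ⟪(α : E3), (ψ : E3)⟫ with hcdef
  have hc : |c| ≤ 1 := by
    have h := abs_real_inner_le_norm (α : E3) (ψ : E3)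
    rw [hαn, hψn] at h
    simpa using h
  have hsimp : ∀ l : sphere (0 : E3) 1,
      heaviside ⟪(α : E3), (ψ : E3) + (l : E3)⟫ * (1 / (4 * Real.pi))
        = heaviside (c + ⟪(α : E3), (l : E3)⟫) * (1 / (4 * Real.pi)) := by
    intro l
    rw [inner_add_right]
  rw [integral_congr_ae (Filter.Eventually.of_forall hsimp), integral_mul_const,
    sphere_int (α : E3) hαn c hc]
  have hπ : Real.pi ≠ 0 := Real.pi_ne_zero
  field_simp
  ring
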